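/- In the rewrite game over {a,b} with rules a^k → ε (k > 1 fixed) and b → ε, the Grundy value of a word u equals the parity of |u|_b + ⌊|u|_a / k⌋; in particular the languages of words of Grundy value 0 and of Grundy value 1 are both regular. -/

import Mathlib

inductive AB | a | b
deriving DecidableEq

/-- One move of the game `{a^k → ε, b → ε}`. -/
def Step (k : ℕ) (w w' : List AB) : Prop :=
  ∃ x y : List AB, w' = x ++ y ∧
    (w = x ++ List.replicate k AB.a ++ y ∨ w = x ++ [AB.b] ++ y)

/-- The minimum excluded value of a set of naturals. -/
noncomputable def mex (S : Set ℕ) : ℕ := sInf {n | n ∉ S}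

/-- `g` is the Grundy function of the game with moves `step`. -/
def IsGrundy (step : List AB → List AB → Prop) (g : List AB → ℕ) : Prop :=
  ∀ w, g w = mex (g '' {w' | step w w'})

/-- A language over `{a,b}` is regular if it is accepted by a DFA with finitely
many states. -/
def Regular (Lang : Set (List AB)) : Prop :=
  ∃ (σ : Type) (_ : Fintype σ) (M : DFA AB σ), M.accepts = Lang

/-- The value function. -/
def fAB (k : ℕ) (u : List AB) : ℕ := u.count AB.b + u.count AB.a / k

lemma mex_empty : mex (∅ : Set ℕ) = 0 := by
  rw [mex, Nat.sInf_eq_zero]; left; simp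

lemma mex_singleton_zero : mex ({0} : Set ℕ) = 1 := by
  rw [mex]
  apply le_antisymm
  · exact Nat.sInf_le (by simp)
  · rcases Nat.eq_zero_or_pos (sInf {n | n ∉ ({0} : Set ℕ)}) with h | h
    · exfalso
      rw [Nat.sInf_eq_zero] at h
      rcases h with h | h
      · simp at h
      · have : (1 : ℕ) ∈ {n | n ∉ ({0} : Set ℕ)} := by simp
        rw [h] at this; exact this
    · exact h

lemma mex_singleton_one : mex ({1} : Set ℕ) = 0 := by
  rw [mex, Nat.sInf_eq_zero]; left; simp

/-- Every move decreases `fAB` by exactly one. -/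
lemma step_fAB {k : ℕ} (hk : 1 < k) {u u' : List AB} (h : Step k u u') :
    fAB k u = fAB k u' + 1 := by
  obtain ⟨x, y, rfl, h | h⟩ := h
  · subst h
    have c1 : (List.replicate k AB.a).count AB.a = k := by
      rw [List.count_replicate]; simp
    have c2 : (List.replicate k AB.a).count AB.b = 0 := by
      rw [List.count_replicate]; simp
    simp only [fAB, List.count_append, c1, c2, Nat.add_zero]
    have hk0 : 0 < k := by omega
    have : (x.count AB.a + k + y.count AB.a) / k
        = (x.count AB.a + y.count AB.a) / k + 1 := by
      rw [show x.count AB.a + k + y.count AB.a = x.count AB.a + y.count AB.a + k by ring,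
        Nat.add_div_right _ hk0]
    omega
  · subst h
    have c1 : ([AB.b] : List AB).count AB.a = 0 := by decide
    have c2 : ([AB.b] : List AB).count AB.b = 1 := by decide
    simp only [fAB, List.count_append, c1, c2, Nat.add_zero]
    omega

/-- Every move shortens the word. -/
lemma step_length {k : ℕ} (hk : 1 < k) {u u' : List AB} (h : Step k u u') :
    u'.length < u.length := by
  obtain ⟨x, y, rfl, h | h⟩ := h <;> subst h <;> simp <;> omega

/-- If `fAB` is positive there is a move. -/
lemma step_exists {k : ℕ} (hk : 1 < k) {u : List AB} (h : 0 < fAB k u) :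
    ∃ u', Step k u u' := by
  rcases Nat.eq_zero_or_pos (u.count AB.b) with hb | hb
  · -- no b's: u is all a's and has at least k of them
    have hbne : AB.b ∉ u := by
      intro hc
      have := List.count_pos_iff.mpr hc
      omega
    have hmem : ∀ c ∈ u, c = AB.a := by
      intro c hc
      cases c with
      | a => rfl
      | b => exact absurd hc hbne
    have hrep : u = List.replicate u.length AB.a := List.eq_replicate_of_mem hmem
    have hcnt : u.count AB.a = u.length := by
      rw [hrep]; simp
    have hlen : k ≤ u.length := by
      by_contra hcon
      have : u.count AB.a / k = 0 := Nat.div_eq_of_lt (by omega)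
      simp [fAB, this, hb] at h
    have key : u = List.replicate k AB.a ++ List.replicate (u.length - k) AB.a := by
      conv_lhs => rw [hrep]
      rw [← List.replicate_add]
      congr 1
      omega
    exact ⟨List.replicate (u.length - k) AB.a, [], List.replicate (u.length - k) AB.a,
      by simp, Or.inl (by simpa using key)⟩
  · obtain ⟨s, t, hst⟩ := List.append_of_mem (List.count_pos_iff.mp hb)
    exact ⟨s ++ t, s, t, rfl, Or.inr (by simpa using hst)⟩

/-- If `fAB u = 0` there is no move. -/
lemma step_none {k : ℕ} (hk : 1 < k) {u : List AB} (h : fAB k u = 0) :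
    ∀ u', ¬ Step k u u' := by
  intro u' hs
  have := step_fAB hk hs
  omega

lemma grundy_eq {k : ℕ} (hk : 1 < k) {g : List AB → ℕ}
    (hg : IsGrundy (Step k) g) : ∀ u, g u = fAB k u % 2 := by
  have main : ∀ n (u : List AB), u.length ≤ n → g u = fAB k u % 2 := by
    intro n
    induction n with
    | zero =>
      intro u hu
      have hu0 : u = [] := List.length_eq_zero_iff.mp (by omega)
      subst hu0
      have hf : fAB k [] = 0 := by simp [fAB]
      have hemp : {w' | Step k ([] : List AB) w'} = ∅ := by
        ext w'; simp only [Set.mem_setOf_eq, Set.mem_empty_iff_false, iff_false]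
        exact step_none hk hf w'
      rw [hg [], hemp, hf]
      simp [mex_empty]
    | succ n ih =>
      intro u hu
      rcases Nat.eq_zero_or_pos (fAB k u) with hf0 | hpos
      · have hemp : {w' | Step k u w'} = ∅ := by
          ext w'; simp only [Set.mem_setOf_eq, Set.mem_empty_iff_false, iff_false]
          exact step_none hk hf0 w'
        rw [hg u, hemp, hf0]
        simp [mex_empty]
      · have himg : g '' {w' | Step k u w'} = {(fAB k u - 1) % 2} := by
          apply Set.eq_singleton_iff_nonempty_unique_mem.mpr
          constructor
          · obtain ⟨u', hu'⟩ := step_exists hk hpos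
            exact ⟨g u', ⟨u', hu', rfl⟩⟩
          · rintro m ⟨u', hu', rfl⟩
            have hfs := step_fAB hk hu'
            have hls := step_length hk hu'
            rw [ih u' (by omega)]
            omega
        rw [hg u, himg]
        rcases Nat.mod_two_eq_zero_or_one (fAB k u - 1) with h2 | h2 <;> rw [h2]
        · rw [mex_singleton_zero]; omega
        · rw [mex_singleton_one]; omega
  exact fun u => main u.length u le_rfl

/-- The DFA recognizing words of a given parity value. -/
def gameDFA (k : ℕ) (t : ZMod 2) : DFA AB (ZMod 2 × ZMod k) where
  step := fun s x => match x with
    | AB.b => (s.1 + 1, s.2)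
    | AB.a => if s.2 = -1 then (s.1 + 1, s.2 + 1) else (s.1, s.2 + 1)
  start := (0, 0)
  accept := {s | s.1 = t}

lemma gameDFA_eval {k : ℕ} [NeZero k] (hk : 1 < k) (t : ZMod 2) (u : List AB) :
    (gameDFA k t).eval u = (((fAB k u : ℕ) : ZMod 2), ((u.count AB.a : ℕ) : ZMod k)) := by
  induction u using List.reverseRecOn with
  | nil => simp [DFA.eval, DFA.evalFrom, gameDFA, fAB]
  | append_singleton u x ih =>
    have hstep : (gameDFA k t).eval (u ++ [x])
        = (gameDFA k t).step ((gameDFA k t).eval u) x :=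
      DFA.evalFrom_append_singleton _ _ _ _
    rw [hstep, ih]
    cases x with
    | b =>
      have cb : (u ++ [AB.b]).count AB.b = u.count AB.b + 1 := by
        simp [List.count_append]
      have ca : (u ++ [AB.b]).count AB.a = u.count AB.a := by
        simp [List.count_append]
      have hf : fAB k (u ++ [AB.b]) = fAB k u + 1 := by
        simp [fAB, cb, ca]; omega
      show ((fAB k u : ZMod 2) + 1, (u.count AB.a : ZMod k)) = _
      rw [hf, ca]
      push_cast
      rfl
    | a =>
      have cb : (u ++ [AB.a]).count AB.b = u.count AB.b := by
        simp [List.count_append]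
      have ca : (u ++ [AB.a]).count AB.a = u.count AB.a + 1 := by
        simp [List.count_append]
      have hsd : (u.count AB.a + 1) / k
          = u.count AB.a / k + if k ∣ u.count AB.a + 1 then 1 else 0 :=
        Nat.succ_div
      by_cases hd : k ∣ u.count AB.a + 1
      · have hc : ((u.count AB.a : ℕ) : ZMod k) = -1 := by
          have h0 : ((u.count AB.a + 1 : ℕ) : ZMod k) = 0 :=
            (ZMod.natCast_eq_zero_iff _ _).mpr hd
          push_cast at h0
          exact eq_neg_of_add_eq_zero_left h0
        have hf : fAB k (u ++ [AB.a]) = fAB k u + 1 := by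
          simp only [fAB, cb, ca, hsd, if_pos hd]; omega
        show (if ((u.count AB.a : ℕ) : ZMod k) = -1 then _ else _) = _
        rw [if_pos hc, hf, ca]
        push_cast
        rfl
      · have hc : ((u.count AB.a : ℕ) : ZMod k) ≠ -1 := by
          intro hcon
          have h0 : ((u.count AB.a + 1 : ℕ) : ZMod k) = 0 := by
            push_cast
            rw [hcon]; ring
          exact hd ((ZMod.natCast_eq_zero_iff _ _).mp h0)
        have hf : fAB k (u ++ [AB.a]) = fAB k u := by
          simp only [fAB, cb, ca, hsd, if_neg hd]; omega
        show (if ((u.count AB.a : ℕ) : ZMod k) = -1 then _ else _) = _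
        rw [if_neg hc, hf, ca]
        push_cast
        rfl

lemma cast_two_eq_zero (n : ℕ) : ((n : ZMod 2) = 0) ↔ n % 2 = 0 := by
  rw [← ZMod.natCast_mod n 2]
  rcases Nat.mod_two_eq_zero_or_one n with h | h <;> rw [h] <;> decide

lemma cast_two_eq_one (n : ℕ) : ((n : ZMod 2) = 1) ↔ n % 2 = 1 := by
  rw [← ZMod.natCast_mod n 2]
  rcases Nat.mod_two_eq_zero_or_one n with h | h <;> rw [h] <;> decide

theorem stmt15 (k : ℕ) (hk : 1 < k) (g : List AB → ℕ) (hg : IsGrundy (Step k) g) :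
    (∀ u : List AB, g u = (u.count AB.b + u.count AB.a / k) % 2) ∧
    Regular {u | g u = 0} ∧ Regular {u | g u = 1} := by
  haveI : NeZero k := ⟨by omega⟩
  have h1 := grundy_eq hk hg
  refine ⟨h1, ?_, ?_⟩
  · refine ⟨ZMod 2 × ZMod k, inferInstance, gameDFA k 0, ?_⟩
    ext u
    rw [DFA.mem_accepts, gameDFA_eval hk 0 u]
    show ((fAB k u : ℕ) : ZMod 2) = 0 ↔ g u = 0
    rw [cast_two_eq_zero, h1 u]
  · refine ⟨ZMod 2 × ZMod k, inferInstance, gameDFA k 1, ?_⟩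
    ext u
    rw [DFA.mem_accepts, gameDFA_eval hk 1 u]
    show ((fAB k u : ℕ) : ZMod 2) = 1 ↔ g u = 1
    rw [cast_two_eq_one, h1 u]
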